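/- arXiv:1802.02419 — 3 statements merged into one kernel-verified Lean document; each statement's English description precedes it below -/
import Mathlib

section
/- Let L_1, …, L_N be pairwise non-associated irreducible polynomials in K[x_1,…,x_M], let c_1, …, c_N ∈ K, and let r ∈ K(x_1,…,x_M) be a rational function such that ∂_j r = Σ_{l=1}^N c_l (∂_j L_l)/L_l for every j = 1, …, M. Then c_l = 0 for every l, and r is a constant, i.e. r ∈ K. -/
open MvPolynomial

noncomputable section

/-- `K(x_1,…,x_M)`, the field of rational functions in the invariants. -/
abbrev FX (K : Type*) [Field K] (M : ℕ) : Type _ :=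
  FractionRing (MvPolynomial (Fin M) K)

namespace DlogAux

open AddMonoidAlgebra Finset

variable {K : Type*} [Field K] {M : ℕ}

lemma coeff_pderiv (j : Fin M) (m : Fin M →₀ ℕ) (p : MvPolynomial (Fin M) K) :
    MvPolynomial.coeff m (pderiv j p) = ((m j + 1 : ℕ) : K) * MvPolynomial.coeff (m + Finsupp.single j 1) p := by
  classical
  induction p using MvPolynomial.induction_on' with
  | add p q hp hq => simp [hp, hq, mul_add]
  | monomial s a =>
    rw [pderiv_monomial, MvPolynomial.coeff_monomial, MvPolynomial.coeff_monomial]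
    by_cases h : s = m + Finsupp.single j 1
    · subst h
      rw [if_pos (by simp : m + Finsupp.single j 1 - Finsupp.single j 1 = m), if_pos rfl,
        Finsupp.add_apply, Finsupp.single_eq_same]
      push_cast
      ring
    · rw [if_neg h, mul_zero]
      by_cases h2 : s - Finsupp.single j 1 = m
      · rw [if_pos h2]
        have hsj : s j = 0 := by
          by_contra hsj
          apply h
          have hle : Finsupp.single j 1 ≤ s := by
            rw [Finsupp.single_le_iff]
            omega
          rw [← h2, tsub_add_cancel_of_le hle]
        rw [hsj]
        simp
      · rw [if_neg h2]


lemma exists_C_of_pderiv_eq_zero [CharZero K] {p : MvPolynomial (Fin M) K}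
    (h : ∀ j, pderiv j p = 0) : ∃ k : K, p = C k := by
  classical
  refine ⟨MvPolynomial.coeff 0 p, ?_⟩
  ext m
  rcases eq_or_ne m 0 with rfl | hm
  · simp
  · obtain ⟨i, hi⟩ : ∃ i, m i ≠ 0 := by
      by_contra h'
      push_neg at h'
      exact hm (Finsupp.ext fun i => h' i)
    have h1 : Finsupp.single i 1 ≤ m := by
      rw [Finsupp.single_le_iff]
      omega
    have h2 := coeff_pderiv i (m - Finsupp.single i 1) p
    rw [h i, MvPolynomial.coeff_zero, tsub_add_cancel_of_le h1] at h2
    have h4 : MvPolynomial.coeff m p = 0 := by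
      rcases mul_eq_zero.mp h2.symm with h' | h'
      · exact absurd h' (Nat.cast_ne_zero.mpr (Nat.succ_ne_zero _))
      · exact h'
    rw [h4, MvPolynomial.coeff_C, if_neg (Ne.symm hm)]

lemma mem_support_of_pderiv {p : MvPolynomial (Fin M) K} {j : Fin M} {m : Fin M →₀ ℕ}
    [CharZero K] (h : m ∈ (pderiv j p).support) :
    m + Finsupp.single j 1 ∈ p.support := by
  rw [MvPolynomial.mem_support_iff] at h ⊢
  intro h0
  rw [coeff_pderiv, h0, mul_zero] at h
  exact h rfl

lemma supDegree_pderiv_lt [CharZero K] {p : MvPolynomial (Fin M) K} {j : Fin M}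
    (h : pderiv j p ≠ 0) :
    AddMonoidAlgebra.supDegree toLex (pderiv j p) < AddMonoidAlgebra.supDegree toLex p := by
  classical
  have hne : (pderiv j p).support.Nonempty := by
    exact MvPolynomial.support_nonempty.mpr h
  have key : ∀ m ∈ (pderiv j p).support,
      toLex m < AddMonoidAlgebra.supDegree toLex p := by
    intro m hmem
    have h1 : m + Finsupp.single j 1 ∈ p.support := mem_support_of_pderiv hmem
    have h2 : toLex (m + Finsupp.single j 1) ≤ AddMonoidAlgebra.supDegree toLex p :=
      Finset.le_sup h1
    refine lt_of_lt_of_le ?_ h2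
    have hlt : m < m + Finsupp.single j 1 := by
      refine lt_of_le_of_ne (le_add_of_nonneg_right (zero_le)) ?_
      intro he
      have := congrArg (fun f => f j) he
      simp [Finsupp.add_apply, Finsupp.single_eq_same] at this
    exact Finsupp.lex_lt_of_lt _ hlt
  obtain ⟨m0, hm0⟩ := hne
  have hbot : (⊥ : Lex (Fin M →₀ ℕ)) < AddMonoidAlgebra.supDegree toLex p :=
    lt_of_le_of_lt bot_le (key m0 hm0)
  exact Finset.sup_lt_iff hbot |>.mpr key

lemma supDegree_le_of_dvd {p q : MvPolynomial (Fin M) K} (hq : q ≠ 0) (h : p ∣ q) :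
    AddMonoidAlgebra.supDegree toLex p ≤ AddMonoidAlgebra.supDegree toLex q := by
  obtain ⟨u, rfl⟩ := h
  have hp : p ≠ 0 := left_ne_zero_of_mul hq
  have hu : u ≠ 0 := right_ne_zero_of_mul hq
  have hD : Function.Injective (toLex : (Fin M →₀ ℕ) → Lex (Fin M →₀ ℕ)) := toLex.injective
  have hadd : ∀ a1 a2 : Fin M →₀ ℕ, toLex (a1 + a2) = toLex a1 + toLex a2 := fun _ _ => rfl
  have hmul := AddMonoidAlgebra.supDegree_mul (p := p) (q := u) hD hadd
    (mul_ne_zero ((AddMonoidAlgebra.leadingCoeff_ne_zero hD).mpr hp)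
      ((AddMonoidAlgebra.leadingCoeff_ne_zero hD).mpr hu)) hp hu
  rw [hmul]
  exact le_add_of_nonneg_right (by exact bot_le)

lemma pderiv_eq_zero_of_self_dvd [CharZero K] {p : MvPolynomial (Fin M) K} {j : Fin M}
    (hp : p ≠ 0) (h : p ∣ pderiv j p) : pderiv j p = 0 := by
  by_contra hne
  exact absurd (supDegree_le_of_dvd hne h) (not_le_of_gt (supDegree_pderiv_lt hne))

lemma not_forall_dvd_pderiv [CharZero K] {p : MvPolynomial (Fin M) K}
    (hp : Irreducible p) (h : ∀ j, p ∣ pderiv j p) : False := by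
  have hz : ∀ j, pderiv j p = 0 := fun j => pderiv_eq_zero_of_self_dvd hp.ne_zero (h j)
  obtain ⟨k, rfl⟩ := exists_C_of_pderiv_eq_zero hz
  rcases eq_or_ne k 0 with rfl | hk
  · exact hp.ne_zero (by simp)
  · exact hp.not_isUnit (IsUnit.of_mul_eq_one (a := C k) (C k⁻¹)
      (by rw [← C_mul, mul_inv_cancel₀ hk, C_1]))

end DlogAux

open DlogAux Finset in
set_option maxHeartbeats 1600000 in
/-- If a rational function `r ∈ K(x_1,…,x_M)` satisfies
`∂_j r = Σ_l c_l (∂_j L_l)/L_l` for all `j`, where the `L_l` are pairwise non-associated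
irreducible polynomials, then all `c_l` vanish and `r` is a constant. -/
theorem dlog_rational_constant
    {K : Type*} [Field K] [CharZero K] {M N : ℕ}
    -- the derivations `∂ j` of `K(x_1,…,x_M)`, extending `∂/∂x_j` on the polynomial ring
    (der : Fin M → Derivation K (FX K M) (FX K M))
    (hder : ∀ (j : Fin M) (p : MvPolynomial (Fin M) K),
      der j (algebraMap (MvPolynomial (Fin M) K) (FX K M) p)
        = algebraMap (MvPolynomial (Fin M) K) (FX K M) (pderiv j p))
    -- the letters: pairwise non-associated irreducible polynomials
    (L : Fin N → MvPolynomial (Fin M) K)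
    (hLirr : ∀ l, Irreducible (L l))
    (hLass : ∀ l l', l ≠ l' → ¬ Associated (L l) (L l'))
    (c : Fin N → K) (r : FX K M)
    (hr : ∀ j, der j r = ∑ l, algebraMap K (FX K M) (c l) *
      (algebraMap (MvPolynomial (Fin M) K) (FX K M) (pderiv j (L l))
        / algebraMap (MvPolynomial (Fin M) K) (FX K M) (L l))) :
    (∀ l, c l = 0) ∧ ∃ k : K, r = algebraMap K (FX K M) k := by
  classical
  have hinj : Function.Injective (algebraMap (MvPolynomial (Fin M) K) (FX K M)) :=
    IsFractionRing.injective _ _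
  obtain ⟨a, b, hab, hmk⟩ := IsFractionRing.exists_reduced_fraction (MvPolynomial (Fin M) K) r
  have hb0 : (b : MvPolynomial (Fin M) K) ≠ 0 := nonZeroDivisors.coe_ne_zero b
  have hr' : r = algebraMap (MvPolynomial (Fin M) K) (FX K M) a
      / algebraMap (MvPolynomial (Fin M) K) (FX K M) (b : MvPolynomial (Fin M) K) := by
    rw [← hmk, IsFractionRing.mk'_eq_div]
  have hLne : ∀ l, L l ≠ 0 := fun l => (hLirr l).ne_zero
  have hP0 : (∏ l, L l) ≠ 0 := Finset.prod_ne_zero_iff.mpr fun l _ => hLne l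
  have hmap : ∀ p : MvPolynomial (Fin M) K, p ≠ 0 →
      algebraMap (MvPolynomial (Fin M) K) (FX K M) p ≠ 0 := by
    intro p hp h
    exact hp (hinj (by simpa using h))
  have hCmap : ∀ x : K, algebraMap (MvPolynomial (Fin M) K) (FX K M) (C x)
      = algebraMap K (FX K M) x := by
    intro x
    rw [← MvPolynomial.algebraMap_eq, ← IsScalarTower.algebraMap_apply]
  set S : Fin M → MvPolynomial (Fin M) K :=
    fun j => ∑ l, C (c l) * pderiv j (L l) * ∏ l' ∈ univ.erase l, L l' with hSdef
  have star : ∀ j, ((b : MvPolynomial (Fin M) K) * pderiv j a - a * pderiv j b) * ∏ l, L l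
      = (b : MvPolynomial (Fin M) K)^2 * S j := by
    intro j
    apply hinj
    simp only [map_mul, map_sub, map_pow]
    have hd := hr j
    rw [hr', Derivation.leibniz_div, hder, hder, smul_eq_mul, smul_eq_mul, smul_eq_mul] at hd
    have hbφ : algebraMap (MvPolynomial (Fin M) K) (FX K M) (b : MvPolynomial (Fin M) K) ≠ 0 :=
      hmap _ hb0
    have hsum : (∑ l, algebraMap K (FX K M) (c l) *
          (algebraMap (MvPolynomial (Fin M) K) (FX K M) (pderiv j (L l))
            / algebraMap (MvPolynomial (Fin M) K) (FX K M) (L l))) *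
          algebraMap (MvPolynomial (Fin M) K) (FX K M) (∏ l, L l)
        = algebraMap (MvPolynomial (Fin M) K) (FX K M) (S j) := by
      rw [Finset.sum_mul]
      simp only [hSdef]
      rw [map_sum]
      refine Finset.sum_congr rfl fun l _ => ?_
      have hfact : algebraMap (MvPolynomial (Fin M) K) (FX K M) (∏ l', L l')
          = algebraMap (MvPolynomial (Fin M) K) (FX K M) (L l)
            * algebraMap (MvPolynomial (Fin M) K) (FX K M) (∏ l' ∈ univ.erase l, L l') := by
        rw [← map_mul, Finset.mul_prod_erase _ _ (mem_univ l)]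
      rw [hfact, ← hCmap, map_mul, map_mul]
      field_simp [hmap _ (hLne l)]
    have hd' : algebraMap (MvPolynomial (Fin M) K) (FX K M) (b : MvPolynomial (Fin M) K)
          * algebraMap (MvPolynomial (Fin M) K) (FX K M) (pderiv j a)
        - algebraMap (MvPolynomial (Fin M) K) (FX K M) a
          * algebraMap (MvPolynomial (Fin M) K) (FX K M) (pderiv j (b : MvPolynomial (Fin M) K))
        = algebraMap (MvPolynomial (Fin M) K) (FX K M) (b : MvPolynomial (Fin M) K) ^ 2
          * (∑ l, algebraMap K (FX K M) (c l) *
            (algebraMap (MvPolynomial (Fin M) K) (FX K M) (pderiv j (L l))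
              / algebraMap (MvPolynomial (Fin M) K) (FX K M) (L l))) := by
      rw [← hd, ← mul_assoc, inv_pow, mul_inv_cancel₀ (pow_ne_zero 2 hbφ), one_mul]
    rw [hd', ← hsum]
    ring
  have hc : ∀ l, c l = 0 := by
    intro l
    by_contra hcl
    have hprime : Prime (L l) := UniqueFactorizationMonoid.irreducible_iff_prime.mp (hLirr l)
    have hnotdvd : ∀ l', l' ≠ l → ¬ L l ∣ L l' := by
      intro l' hne hdvd
      exact hLass l l' (Ne.symm hne) ((hLirr l).associated_of_dvd (hLirr l') hdvd)
    have hQ : ¬ L l ∣ ∏ l' ∈ univ.erase l, L l' := by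
      intro hdvd
      obtain ⟨l', hl', hdvd'⟩ := hprime.exists_mem_finset_dvd hdvd
      exact hnotdvd l' (Finset.ne_of_mem_erase hl') hdvd'
    have hCunit : IsUnit (C (c l) : MvPolynomial (Fin M) K) :=
      IsUnit.of_mul_eq_one (C (c l)⁻¹) (by rw [← C_mul, mul_inv_cancel₀ hcl, C_1])
    refine not_forall_dvd_pderiv (hLirr l) fun j => ?_
    have hSsplit : S j = C (c l) * pderiv j (L l) * (∏ l' ∈ univ.erase l, L l')
        + ∑ l' ∈ univ.erase l, C (c l') * pderiv j (L l') * ∏ l'' ∈ univ.erase l', L l'' := by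
      simp only [hSdef]
      exact (Finset.add_sum_erase univ _ (mem_univ l)).symm
    have hrest : L l ∣ ∑ l' ∈ univ.erase l,
        C (c l') * pderiv j (L l') * ∏ l'' ∈ univ.erase l', L l'' := by
      refine Finset.dvd_sum fun l' hl' => ?_
      have hmem : l ∈ univ.erase l' :=
        Finset.mem_erase.mpr ⟨(Finset.ne_of_mem_erase hl').symm, mem_univ l⟩
      exact Dvd.dvd.mul_left (Finset.dvd_prod_of_mem _ hmem) _
    by_cases hbdvd : L l ∣ (b : MvPolynomial (Fin M) K)
    · obtain ⟨n, b₁, hb₁, hbeq⟩ := WfDvdMonoid.max_power_factor hb0 (hLirr l)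
      obtain ⟨k, rfl⟩ : ∃ k, n = k + 1 := by
        rcases n with _ | k
        · rw [pow_zero, one_mul] at hbeq
          exact absurd (hbeq ▸ hbdvd) hb₁
        · exact ⟨k, rfl⟩
      have hdb : pderiv j ((L l)^(k+1) * b₁)
          = ((k+1 : ℕ) * (L l)^k * pderiv j (L l)) * b₁ + (L l)^(k+1) * pderiv j b₁ := by
        rw [pderiv_mul, pderiv_pow, Nat.add_sub_cancel]
      have hkey : ((L l) * (b₁ * pderiv j a - a * pderiv j b₁)
            - (k+1 : ℕ) * (a * pderiv j (L l) * b₁)) * ∏ l' ∈ univ.erase l, L l'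
          = (L l)^(k+1) * (b₁^2 * S j) := by
        apply mul_left_cancel₀ (pow_ne_zero (k+1) hprime.ne_zero)
        have hst := star j
        rw [hbeq, hdb, ← Finset.mul_prod_erase univ L (mem_univ l)] at hst
        linear_combination hst
      have hdvdT : L l ∣ ((L l) * (b₁ * pderiv j a - a * pderiv j b₁)
            - (k+1 : ℕ) * (a * pderiv j (L l) * b₁)) := by
        have h1 : L l ∣ ((L l) * (b₁ * pderiv j a - a * pderiv j b₁)
            - (k+1 : ℕ) * (a * pderiv j (L l) * b₁)) * ∏ l' ∈ univ.erase l, L l' := by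
          rw [hkey]
          exact Dvd.dvd.mul_right (dvd_pow_self _ (Nat.succ_ne_zero k)) _
        rcases hprime.dvd_mul.mp h1 with h | h
        · exact h
        · exact absurd h hQ
      have h2 : L l ∣ (k+1 : ℕ) * (a * pderiv j (L l) * b₁) := by
        have h3 := dvd_sub (dvd_mul_right (L l) (b₁ * pderiv j a - a * pderiv j b₁)) hdvdT
        have h4 : (L l) * (b₁ * pderiv j a - a * pderiv j b₁)
            - ((L l) * (b₁ * pderiv j a - a * pderiv j b₁)
              - (k+1 : ℕ) * (a * pderiv j (L l) * b₁))
            = (k+1 : ℕ) * (a * pderiv j (L l) * b₁) := by ring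
        rwa [h4] at h3
      have hnat : ¬ L l ∣ ((k+1 : ℕ) : MvPolynomial (Fin M) K) := by
        intro hdvd
        have hne : ((k+1 : ℕ) : K) ≠ 0 := Nat.cast_ne_zero.mpr (Nat.succ_ne_zero k)
        have hunit : IsUnit ((k+1 : ℕ) : MvPolynomial (Fin M) K) := by
          rw [← map_natCast (C : K →+* MvPolynomial (Fin M) K)]
          exact IsUnit.of_mul_eq_one (C ((k+1 : ℕ) : K)⁻¹)
            (by rw [← C_mul, mul_inv_cancel₀ hne, C_1])
        exact hprime.not_isUnit (isUnit_of_dvd_unit hdvd hunit)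
      rcases hprime.dvd_mul.mp h2 with h | h
      · exact absurd h hnat
      · rcases hprime.dvd_mul.mp h with h' | h'
        · rcases hprime.dvd_mul.mp h' with h'' | h''
          · exact absurd (hab h'' hbdvd) hprime.not_isUnit
          · exact h''
        · exact absurd h' hb₁
    · have h1 : L l ∣ (b : MvPolynomial (Fin M) K)^2 * S j := by
        rw [← star j]
        exact Dvd.dvd.mul_left (Finset.dvd_prod_of_mem L (mem_univ l)) _
      have h2 : L l ∣ S j := by
        rcases hprime.dvd_mul.mp h1 with h | h
        · exact absurd (hprime.dvd_of_dvd_pow h) hbdvd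
        · exact h
      have h3 : L l ∣ C (c l) * pderiv j (L l) * ∏ l' ∈ univ.erase l, L l' := by
        rw [hSsplit] at h2
        exact (dvd_add_left hrest).mp h2
      rcases hprime.dvd_mul.mp h3 with h | h
      · rcases hprime.dvd_mul.mp h with h' | h'
        · exact absurd (isUnit_of_dvd_unit h' hCunit) hprime.not_isUnit
        · exact h'
      · exact absurd h hQ
  have hS0 : ∀ j, S j = 0 := by
    intro j
    simp [hSdef, hc]
  have hba : ∀ j, (b : MvPolynomial (Fin M) K) * pderiv j a = a * pderiv j b := by
    intro j
    have h := star j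
    rw [hS0 j, mul_zero] at h
    rcases mul_eq_zero.mp h with h' | h'
    · exact sub_eq_zero.mp h'
    · exact absurd h' hP0
  have hdb0 : ∀ j, pderiv j (b : MvPolynomial (Fin M) K) = 0 := by
    intro j
    refine pderiv_eq_zero_of_self_dvd hb0 ?_
    have hdvd : (b : MvPolynomial (Fin M) K) ∣ a * pderiv j b := ⟨pderiv j a, (hba j).symm⟩
    exact hab.symm.dvd_of_dvd_mul_left hdvd
  have hda0 : ∀ j, pderiv j a = 0 := by
    intro j
    have h := hba j
    rw [hdb0 j, mul_zero] at h
    rcases mul_eq_zero.mp h with h' | h'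
    · exact absurd h' hb0
    · exact h'
  obtain ⟨ka, hka⟩ := exists_C_of_pderiv_eq_zero hda0
  obtain ⟨kb, hkb⟩ := exists_C_of_pderiv_eq_zero hdb0
  refine ⟨hc, ka / kb, ?_⟩
  rw [hr', hka, hkb, hCmap, hCmap, map_div₀]
end
end

section
/- Let a = (a_j) be a tuple of m×m matrices over F and let T be an invertible m×m matrix over F such that: (i) every irreducible polynomial in K[x_1,…,x_M] (independent of ε) that is a denominator factor of T is a denominator factor of a, and (ii) every irreducible polynomial in K[x_1,…,x_M] that divides the numerator of det T (written in lowest terms) is a denominator factor of a. Then every irreducible polynomial in K[x_1,…,x_M] that is a denominator factor of the matrix T⁻¹ a_j T − T⁻¹ (∂_j T), for some j, is a denominator factor of a. In particular, if ε Ã_j = T⁻¹ a_j T − T⁻¹ (∂_j T) is a canonical form whose (Ã_j) constitute a dlog-form with letters L_1,…,L_N and nonzero constant coefficient matrices, then every letter L_l is an irreducible denominator factor of a. -/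
open MvPolynomial

noncomputable section

/-- The polynomial ring `K[x_1,…,x_M,ε]`; the variable `some j` is the invariant `x_j`
and `none` is the regulator `ε`. -/
abbrev PolyRing (K : Type*) [Field K] (M : ℕ) : Type _ :=
  MvPolynomial (Option (Fin M)) K

/-- `F = K(x_1,…,x_M,ε)`, the fraction field of `K[x_1,…,x_M,ε]`. -/
abbrev FF (K : Type*) [Field K] (M : ℕ) : Type _ :=
  FractionRing (PolyRing K M)

/-- The regulator `ε` as an element of `F`. -/
def eps (K : Type*) [Field K] (M : ℕ) : FF K M :=
  algebraMap (PolyRing K M) (FF K M) (X none)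

/-- The element `(∂_j L_l)/L_l` of `F`, for a letter `L l ∈ K[x_1,…,x_M]`. -/
def dlogTerm {K : Type*} [Field K] {M N : ℕ} (L : Fin N → MvPolynomial (Fin M) K)
    (j : Fin M) (l : Fin N) : FF K M :=
  algebraMap (PolyRing K M) (FF K M) (rename some (pderiv j (L l)))
    / algebraMap (PolyRing K M) (FF K M) (rename some (L l))

/-- `f` is a denominator factor of `r ∈ F`: writing `r = p/q` in lowest terms
(`p, q` coprime polynomials), `f` divides `q`. -/
def IsDenomFactor {K : Type*} [Field K] {M : ℕ} (f : PolyRing K M) (r : FF K M) : Prop :=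
  ∃ p q : PolyRing K M, q ≠ 0 ∧ IsRelPrime p q ∧
    r = algebraMap (PolyRing K M) (FF K M) p / algebraMap (PolyRing K M) (FF K M) q ∧
    f ∣ q

/-- `f` is a numerator factor of `r ∈ F`: writing `r = p/q` in lowest terms,
`f` divides `p`. -/
def IsNumerFactor {K : Type*} [Field K] {M : ℕ} (f : PolyRing K M) (r : FF K M) : Prop :=
  ∃ p q : PolyRing K M, q ≠ 0 ∧ IsRelPrime p q ∧
    r = algebraMap (PolyRing K M) (FF K M) p / algebraMap (PolyRing K M) (FF K M) q ∧
    f ∣ p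

/-- `f` is a denominator factor of a matrix over `F` if it is a denominator factor of
one of its entries. -/
def IsDenomFactorMat {K : Type*} [Field K] {M : ℕ} {m m' : ℕ} (f : PolyRing K M)
    (A : Matrix (Fin m') (Fin m) (FF K M)) : Prop :=
  ∃ i k, IsDenomFactor f (A i k)

set_option maxHeartbeats 1000000 in
section
set_option synthInstance.maxHeartbeats 500000

namespace Letters

section Aux1
variable {K : Type*} [Field K] {M : ℕ}


variable {K : Type*} [Field K] {M : ℕ}

/-- the left inverse of `rename some` -/
def ψ : PolyRing K M →ₐ[K] MvPolynomial (Fin M) K :=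
  killCompl (Option.some_injective (Fin M))

@[simp] lemma ψ_rename (p : MvPolynomial (Fin M) K) :
    ψ (rename some p) = p := killCompl_rename_app _ p

lemma ψ_X_none : (ψ (X none : PolyRing K M)) = 0 := by
  rw [ψ, killCompl, aeval_X, dif_neg]
  simp

lemma dvd_of_rename_dvd {a b : MvPolynomial (Fin M) K}
    (h : rename (some : Fin M → Option (Fin M)) a ∣ rename some b) : a ∣ b := by
  obtain ⟨c, hc⟩ := h
  exact ⟨ψ c, by have := congrArg ψ hc; simpa using this⟩

lemma associated_of_rename_associated {a b : MvPolynomial (Fin M) K}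
    (h : Associated (rename (some : Fin M → Option (Fin M)) a) (rename some b)) :
    Associated a b :=
  associated_of_dvd_dvd (dvd_of_rename_dvd h.dvd) (dvd_of_rename_dvd h.symm.dvd)

lemma prime_rename_some {f : MvPolynomial (Fin M) K} (hf : Prime f) :
    Prime (rename (some : Fin M → Option (Fin M)) f) := by
  have hinj := Option.some_injective (Fin M)
  set s : Set (Option (Fin M)) := Set.range (some : Fin M → Option (Fin M)) with hs
  have h1 : Prime (rename ((Equiv.ofInjective _ hinj : Fin M ≃ s) : Fin M → s) f) := by
    have := MulEquiv.prime_iff (renameEquiv K (Equiv.ofInjective _ hinj : Fin M ≃ s)).toMulEquiv (p := f)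
    simpa using this.mpr hf
  have h2 : rename (some : Fin M → Option (Fin M)) f
      = rename ((↑) : s → Option (Fin M))
          (rename ((Equiv.ofInjective _ hinj : Fin M ≃ s) : Fin M → s) f) := by
    rw [rename_rename]
    congr 1
  rw [h2]
  exact (prime_rename_iff s).mpr h1

lemma prime_X_none : Prime (X none : PolyRing K M) := by
  rw [← MulEquiv.prime_iff (optionEquivLeft K (Fin M)).toMulEquiv]
  simpa [optionEquivLeft_X_none] using Polynomial.prime_X

end Aux1

section Aux2
variable {K : Type*} [Field K]


variable {σ : Type*} [DecidableEq σ]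

/-- view `MvPolynomial σ K` as polynomials in the single variable `j` -/
def toPoly (j : σ) : MvPolynomial σ K ≃ₐ[K] Polynomial (MvPolynomial {b : σ // b ≠ j} K) :=
  (renameEquiv K (Equiv.optionSubtypeNe j).symm).trans (optionEquivLeft K _)

lemma toPoly_X_self (j : σ) : toPoly j (X j : MvPolynomial σ K) = Polynomial.X := by
  simp [toPoly, Equiv.optionSubtypeNe_symm_self, optionEquivLeft_X_none]

lemma toPoly_X_ne (j i : σ) (h : i ≠ j) :
    toPoly j (X i : MvPolynomial σ K) = Polynomial.C (X ⟨i, h⟩) := by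
  simp [toPoly, Equiv.optionSubtypeNe_symm_of_ne h, optionEquivLeft_X_some]

lemma toPoly_pderiv (j : σ) (p : MvPolynomial σ K) :
    toPoly j (pderiv j p) = Polynomial.derivative (toPoly j p) := by
  induction p using MvPolynomial.induction_on with
  | C a =>
    rw [pderiv_C, map_zero]
    have : (toPoly j (C a : MvPolynomial σ K)) = Polynomial.C (C a) := by
      simp [toPoly, rename_C, optionEquivLeft_C]
    rw [this, Polynomial.derivative_C]
  | add p q hp hq => simp [map_add, hp, hq]
  | mul_X p i hp =>
    have hbase : toPoly j (pderiv j (X i : MvPolynomial σ K))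
        = Polynomial.derivative (toPoly j (X i : MvPolynomial σ K)) := by
      rcases eq_or_ne i j with rfl | h
      · rw [pderiv_X_self, map_one, toPoly_X_self, Polynomial.derivative_X]
      · rw [pderiv_X_of_ne h, map_zero, toPoly_X_ne j i h, Polynomial.derivative_C]
    rw [pderiv_mul, map_add, map_mul, map_mul, map_mul, hp, hbase,
      Polynomial.derivative_mul]

lemma not_dvd_pderiv (j : σ) (f : MvPolynomial σ K) (hne : pderiv j f ≠ 0) :
    ¬ f ∣ pderiv j f := by
  intro hdvd
  have hEne : toPoly j (pderiv j f) ≠ 0 := by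
    simpa using (map_ne_zero_iff _ (toPoly j).injective).mpr hne
  have hdeg : (toPoly j f).natDegree ≠ 0 := by
    intro h0
    obtain ⟨c, hc⟩ : ∃ c, toPoly j f = Polynomial.C c :=
      ⟨_, Polynomial.eq_C_of_natDegree_eq_zero h0⟩
    apply hEne
    rw [toPoly_pderiv, hc, Polynomial.derivative_C]
  have h1 : (toPoly j f).natDegree ≤ (toPoly j (pderiv j f)).natDegree :=
    Polynomial.natDegree_le_of_dvd (map_dvd (toPoly j) hdvd) hEne
  rw [toPoly_pderiv] at h1
  exact absurd (lt_of_le_of_lt h1 (Polynomial.natDegree_derivative_lt hdeg)) (lt_irrefl _)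

lemma eq_C_of_totalDegree_eq_zero {f : MvPolynomial σ K} (h0 : f.totalDegree = 0) :
    f = C (coeff 0 f) := by
  rw [totalDegree_eq_zero_iff] at h0
  ext m
  rcases eq_or_ne m 0 with rfl | hm
  · simp
  · have hns : m ∉ f.support := fun hmem => hm (by ext x; exact h0 m hmem x)
    rw [notMem_support_iff] at hns
    rw [hns, coeff_C, if_neg (fun hc => hm hc.symm)]

lemma totalDegree_ne_zero_of_irreducible {f : MvPolynomial σ K} (hf : Irreducible f) :
    f.totalDegree ≠ 0 := by
  intro h0
  have := eq_C_of_totalDegree_eq_zero h0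
  rcases eq_or_ne (coeff 0 f) 0 with hc | hc
  · rw [hc, map_zero] at this
    exact hf.ne_zero this
  · exact hf.not_isUnit (this ▸ (isUnit_iff_ne_zero.mpr hc).map C)

lemma pderiv_coeff (j : σ) (f : MvPolynomial σ K) (m : σ →₀ ℕ) (hm : m j ≠ 0) :
    coeff (m - Finsupp.single j 1) (pderiv j f) = coeff m f * (m j : K) := by
  classical
  have hle : Finsupp.single j 1 ≤ m := by
    rw [Finsupp.single_le_iff]; omega
  conv_lhs => rw [f.as_sum, map_sum]
  rw [coeff_sum]
  simp only [pderiv_monomial, coeff_monomial]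
  rw [Finset.sum_eq_single m]
  · rw [if_pos rfl]
  · intro m' _ hne
    by_cases h0 : m' j = 0
    · simp [h0]
    · rw [if_neg]
      intro heq
      apply hne
      have hle' : Finsupp.single j 1 ≤ m' := by
        rw [Finsupp.single_le_iff]; omega
      have := congrArg (· + Finsupp.single j 1) heq
      simpa [tsub_add_cancel_of_le hle, tsub_add_cancel_of_le hle'] using this
  · intro h
    rw [notMem_support_iff.mp h]
    simp

lemma exists_pderiv_ne_zero [CharZero K] {f : MvPolynomial σ K}
    (hf : f.totalDegree ≠ 0) : ∃ j, pderiv j f ≠ 0 := by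
  have h := hf
  rw [Ne, totalDegree_eq_zero_iff] at h
  push_neg at h
  obtain ⟨m, hm, j, hj⟩ := h
  refine ⟨j, fun h0 => ?_⟩
  have hc := pderiv_coeff j f m hj
  rw [h0, coeff_zero] at hc
  have h1 : coeff m f ≠ 0 := mem_support_iff.mp hm
  have h2 : ((m j : K)) ≠ 0 := Nat.cast_ne_zero.mpr hj
  exact h1 (by
    rcases mul_eq_zero.mp hc.symm with h | h
    · exact h
    · exact absurd h h2)

end Aux2

section Reg

variable {K : Type*} [Field K] {M : ℕ}

local notation "φ" => algebraMap (PolyRing K M) (FF K M)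

lemma φ_inj : Function.Injective (φ : PolyRing K M →+* FF K M) :=
  IsFractionRing.injective _ _

lemma φ_ne_zero {q : PolyRing K M} (hq : q ≠ 0) : (φ q : FF K M) ≠ 0 :=
  fun h => hq (φ_inj (by rw [h, map_zero]))

/-- `r` is regular at `f`: it can be written with a denominator not divisible by `f`. -/
def Reg (f : PolyRing K M) (r : FF K M) : Prop :=
  ∃ p q : PolyRing K M, q ≠ 0 ∧ ¬ f ∣ q ∧ r = φ p / φ q

variable {f : PolyRing K M}

lemma reg_algebraMap (hf : ¬ IsUnit f) (p : PolyRing K M) : Reg f (φ p) :=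
  ⟨p, 1, one_ne_zero, fun h => hf (isUnit_of_dvd_one h), by simp⟩

lemma reg_zero (hf : ¬ IsUnit f) : Reg f (0 : FF K M) := by
  simpa using reg_algebraMap hf 0

lemma reg_one (hf : ¬ IsUnit f) : Reg f (1 : FF K M) := by
  simpa using reg_algebraMap hf 1

lemma reg_add (hf : Prime f) {r s : FF K M} (hr : Reg f r) (hs : Reg f s) :
    Reg f (r + s) := by
  obtain ⟨p₁, q₁, hq₁, hf₁, rfl⟩ := hr
  obtain ⟨p₂, q₂, hq₂, hf₂, rfl⟩ := hs
  refine ⟨p₁ * q₂ + p₂ * q₁, q₁ * q₂, mul_ne_zero hq₁ hq₂, ?_, ?_⟩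
  · rw [hf.dvd_mul]; tauto
  · rw [div_add_div _ _ (φ_ne_zero hq₁) (φ_ne_zero hq₂)]
    push_cast [map_add, map_mul]
    ring_nf

lemma reg_mul (hf : Prime f) {r s : FF K M} (hr : Reg f r) (hs : Reg f s) :
    Reg f (r * s) := by
  obtain ⟨p₁, q₁, hq₁, hf₁, rfl⟩ := hr
  obtain ⟨p₂, q₂, hq₂, hf₂, rfl⟩ := hs
  refine ⟨p₁ * p₂, q₁ * q₂, mul_ne_zero hq₁ hq₂, ?_, ?_⟩
  · rw [hf.dvd_mul]; tauto
  · rw [map_mul, map_mul, div_mul_div_comm]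

lemma reg_neg {r : FF K M} (hr : Reg f r) : Reg f (-r) := by
  obtain ⟨p, q, hq, hfq, rfl⟩ := hr
  exact ⟨-p, q, hq, hfq, by rw [map_neg, neg_div]⟩

lemma reg_sub (hf : Prime f) {r s : FF K M} (hr : Reg f r) (hs : Reg f s) :
    Reg f (r - s) := by
  rw [sub_eq_add_neg]
  exact reg_add hf hr (reg_neg hs)

lemma reg_sum (hf : Prime f) {ι : Type*} (s : Finset ι) (g : ι → FF K M)
    (h : ∀ i ∈ s, Reg f (g i)) : Reg f (∑ i ∈ s, g i) := by
  classical
  induction s using Finset.induction_on with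
  | empty => simpa using reg_zero hf.not_unit
  | insert _ _ hni ih =>
    rw [Finset.sum_insert hni]
    exact reg_add hf (h _ (Finset.mem_insert_self _ _))
      (ih fun i hi => h i (Finset.mem_insert_of_mem hi))

lemma reg_prod (hf : Prime f) {ι : Type*} (s : Finset ι) (g : ι → FF K M)
    (h : ∀ i ∈ s, Reg f (g i)) : Reg f (∏ i ∈ s, g i) := by
  classical
  induction s using Finset.induction_on with
  | empty => simpa using reg_one hf.not_unit
  | insert _ _ hni ih =>
    rw [Finset.prod_insert hni]
    exact reg_mul hf (h _ (Finset.mem_insert_self _ _))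
      (ih fun i hi => h i (Finset.mem_insert_of_mem hi))

lemma reg_zsmul (hf : Prime f) {r : FF K M} (z : ℤ) (hr : Reg f r) : Reg f (z • r) := by
  rw [zsmul_eq_mul]
  refine reg_mul hf ?_ hr
  rw [← map_intCast (algebraMap (PolyRing K M) (FF K M)) z]
  exact reg_algebraMap hf.not_unit _

lemma reg_det (hf : Prime f) {m : ℕ} {A : Matrix (Fin m) (Fin m) (FF K M)}
    (h : ∀ i k, Reg f (A i k)) : Reg f A.det := by
  rw [Matrix.det_apply]
  refine reg_sum hf _ _ fun σ _ => reg_zsmul hf _ (reg_prod hf _ _ fun i _ => h _ _)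

lemma reg_der (hf : Prime f) (D : Derivation K (FF K M) (FF K M))
    (hD : ∀ p : PolyRing K M, ∃ p' : PolyRing K M, D (φ p) = φ p')
    {r : FF K M} (hr : Reg f r) : Reg f (D r) := by
  obtain ⟨p, q, hq, hfq, rfl⟩ := hr
  obtain ⟨p₁, hp₁⟩ := hD p
  obtain ⟨q₁, hq₁⟩ := hD q
  refine ⟨p₁ * q - p * q₁, q * q, mul_ne_zero hq hq, by rw [hf.dvd_mul]; tauto, ?_⟩
  rw [Derivation.leibniz_div, hp₁, hq₁]
  have hqne : (φ q : FF K M) ≠ 0 := φ_ne_zero hq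
  rw [map_sub, map_mul, map_mul]
  rw [smul_eq_mul, smul_eq_mul, smul_eq_mul]
  rw [map_mul φ q q]
  field_simp

lemma not_isDenomFactor_iff (hf : Prime f) (r : FF K M) :
    ¬ IsDenomFactor f r ↔ Reg f r := by
  constructor
  · intro h
    refine ⟨IsFractionRing.num (PolyRing K M) r, IsFractionRing.den (PolyRing K M) r,
      nonZeroDivisors.coe_ne_zero _, fun hdvd => h ⟨_, _, nonZeroDivisors.coe_ne_zero _,
        IsFractionRing.num_den_reduced _ r, (IsFractionRing.mk'_num_den' _ r).symm, hdvd⟩,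
      (IsFractionRing.mk'_num_den' _ r).symm⟩
  · rintro ⟨p, q, hq, hfq, rfl⟩ ⟨p₀, q₀, hq₀, hcop, heq, hdvd⟩
    have hcross : p * q₀ = p₀ * q := by
      rw [div_eq_div_iff (φ_ne_zero hq) (φ_ne_zero hq₀)] at heq
      exact φ_inj (by rw [map_mul, map_mul]; exact heq.symm ▸ rfl)
    have hfp₀ : ¬ f ∣ p₀ := fun h => hf.not_unit (hcop h hdvd)
    have hdp : f ∣ p₀ * q := hcross ▸ (hdvd.mul_left p)
    rcases hf.dvd_mul.mp hdp with h | h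
    · exact hfp₀ h
    · exact hfq h

lemma reg_inv (hf : Prime f) {r : FF K M} (hr0 : r ≠ 0)
    (hnum : ¬ IsNumerFactor f r) : Reg f r⁻¹ := by
  have hrd : r = φ (IsFractionRing.num (PolyRing K M) r)
      / φ ((IsFractionRing.den (PolyRing K M) r : PolyRing K M)) :=
    (IsFractionRing.mk'_num_den' _ r).symm
  have hd0 : ((IsFractionRing.den (PolyRing K M) r : PolyRing K M)) ≠ 0 :=
    nonZeroDivisors.coe_ne_zero _
  have hn0 : IsFractionRing.num (PolyRing K M) r ≠ 0 := by
    intro h; exact hr0 (IsFractionRing.eq_zero_of_num_eq_zero h)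
  have hfn : ¬ f ∣ IsFractionRing.num (PolyRing K M) r := fun h =>
    hnum ⟨_, _, hd0, IsFractionRing.num_den_reduced _ r, hrd, h⟩
  have key : r⁻¹ = φ ((IsFractionRing.den (PolyRing K M) r : PolyRing K M))
      / φ (IsFractionRing.num (PolyRing K M) r) := by
    conv_lhs => rw [hrd]
    rw [inv_div]
  exact ⟨(IsFractionRing.den (PolyRing K M) r : PolyRing K M),
    IsFractionRing.num (PolyRing K M) r, hn0, hfn, key⟩

end Reg

lemma isRelPrime_of_prime_not_dvd {A : Type*} [CommMonoidWithZero A] [IsCancelMulZero A] {p a : A}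
    (hp : Prime p) (h : ¬ p ∣ a) : IsRelPrime a p := by
  intro d hda hdp
  obtain ⟨e, he⟩ := hdp
  rcases hp.irreducible.isUnit_or_isUnit he with h1 | h1
  · exact h1
  · exact absurd ((he ▸ (h1.mul_right_dvd.mpr dvd_rfl)).trans hda) h

end Letters
end

set_option maxHeartbeats 2000000 in
set_option synthInstance.maxHeartbeats 500000 in
/-- If every ε-independent irreducible denominator factor of `T` and every ε-independent
irreducible numerator factor of `det T` is a denominator factor of `a`, then every
ε-independent irreducible denominator factor of `T⁻¹ aⱼ T - T⁻¹ ∂ⱼT` is a denominator factor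
of `a`.  In particular, if `T⁻¹ aⱼ T - T⁻¹ ∂ⱼT = ε Ãⱼ` is a canonical form with letters
`L_l` and nonzero constant coefficient matrices, then every letter is an irreducible
denominator factor of `a`. -/
theorem letters_are_denominator_factors
    {K : Type*} [Field K] [CharZero K] {M m : ℕ}
    -- the derivations `∂ j` of `F`, extending `∂/∂x_j` on the polynomial ring
    (der : Fin M → Derivation K (FF K M) (FF K M))
    (hder : ∀ (j : Fin M) (p : PolyRing K M),
      der j (algebraMap (PolyRing K M) (FF K M) p)
        = algebraMap (PolyRing K M) (FF K M) (pderiv (some j) p))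
    (a : Fin M → Matrix (Fin m) (Fin m) (FF K M))
    (T : Matrix (Fin m) (Fin m) (FF K M)) (hT : IsUnit T.det)
    -- (i): ε-independent irreducible denominator factors of `T` are denominator factors of `a`
    (hi : ∀ f : MvPolynomial (Fin M) K, Irreducible f →
      IsDenomFactorMat (rename some f) T → ∃ j, IsDenomFactorMat (rename some f) (a j))
    -- (ii): ε-independent irreducible numerator factors of `det T`
    -- are denominator factors of `a`
    (hii : ∀ f : MvPolynomial (Fin M) K, Irreducible f →
      IsNumerFactor (rename some f) T.det → ∃ j, IsDenomFactorMat (rename some f) (a j)) :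
    (∀ f : MvPolynomial (Fin M) K, Irreducible f →
      (∃ j, IsDenomFactorMat (rename some f) (T⁻¹ * a j * T - T⁻¹ * T.map (der j))) →
      ∃ j, IsDenomFactorMat (rename some f) (a j)) ∧
    (∀ (N : ℕ) (L : Fin N → MvPolynomial (Fin M) K)
        (α : Fin N → Matrix (Fin m) (Fin m) K),
      (∀ l, Irreducible (L l)) →
      (∀ l l', l ≠ l' → ¬ Associated (L l) (L l')) →
      (∀ l, α l ≠ 0) →
      (∀ j, T⁻¹ * a j * T - T⁻¹ * T.map (der j)
        = eps K M • ∑ l, dlogTerm L j l • (α l).map (algebraMap K (FF K M))) →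
      ∀ l, ∃ j, IsDenomFactorMat (rename some (L l)) (a j)) := by
  classical
  have part1 : ∀ f : MvPolynomial (Fin M) K, Irreducible f →
      (∃ j, IsDenomFactorMat (rename some f) (T⁻¹ * a j * T - T⁻¹ * T.map (der j))) →
      ∃ j, IsDenomFactorMat (rename some f) (a j) := by
    intro f hf hex
    by_contra hcon
    push_neg at hcon
    have hfp : Prime (rename (some : Fin M → Option (Fin M)) f) :=
      Letters.prime_rename_some (UniqueFactorizationMonoid.irreducible_iff_prime.mp hf)
    have hRa : ∀ j i k, Letters.Reg (rename some f) (a j i k) := by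
      intro j i k
      rw [← Letters.not_isDenomFactor_iff hfp]
      exact fun hd => hcon j ⟨i, k, hd⟩
    have hRT : ∀ i k, Letters.Reg (rename some f) (T i k) := by
      intro i k
      rw [← Letters.not_isDenomFactor_iff hfp]
      intro hd
      obtain ⟨j, hj⟩ := hi f hf ⟨i, k, hd⟩
      exact hcon j hj
    have hdet0 : T.det ≠ 0 := hT.ne_zero
    have hRdetInv : Letters.Reg (rename some f) (T.det)⁻¹ := by
      apply Letters.reg_inv hfp hdet0
      intro hnum
      obtain ⟨j, hj⟩ := hii f hf hnum
      exact hcon j hj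
    have hRTinv : ∀ i k, Letters.Reg (rename some f) (T⁻¹ i k) := by
      intro i k
      rw [Matrix.inv_def, Matrix.smul_apply, Ring.inverse_eq_inv', smul_eq_mul]
      refine Letters.reg_mul hfp hRdetInv ?_
      rw [Matrix.adjugate_apply]
      apply Letters.reg_det hfp
      intro i' k'
      rw [Matrix.updateRow_apply]
      split
      · rw [Pi.single_apply]
        split
        · exact Letters.reg_one hfp.not_unit
        · exact Letters.reg_zero hfp.not_unit
      · exact hRT _ _
    obtain ⟨j, i, k, hdf⟩ := hex
    refine (Letters.not_isDenomFactor_iff hfp _).mpr ?_ hdf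
    rw [Matrix.sub_apply]
    apply Letters.reg_sub hfp
    · rw [Matrix.mul_apply]
      apply Letters.reg_sum hfp
      intro l _
      apply Letters.reg_mul hfp ?_ (hRT _ _)
      rw [Matrix.mul_apply]
      apply Letters.reg_sum hfp
      intro l2 _
      exact Letters.reg_mul hfp (hRTinv _ _) (hRa _ _ _)
    · rw [Matrix.mul_apply]
      apply Letters.reg_sum hfp
      intro l _
      apply Letters.reg_mul hfp (hRTinv _ _)
      rw [Matrix.map_apply]
      exact Letters.reg_der hfp (der j) (fun p => ⟨_, hder j p⟩) (hRT _ _)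
  refine ⟨part1, ?_⟩
  intro N L α hLirr hLas hα hform l
  apply part1 (L l) (hLirr l)
  obtain ⟨j, hj⟩ := Letters.exists_pderiv_ne_zero
    (Letters.totalDegree_ne_zero_of_irreducible (hLirr l))
  have hik : ∃ i k, α l i k ≠ 0 := by
    by_contra hc
    push_neg at hc
    exact hα l (Matrix.ext fun i k => hc i k)
  obtain ⟨i, k, hik⟩ := hik
  refine ⟨j, i, k, ?_⟩
  rw [hform j]
  set S : Finset (Fin N) :=
    Finset.univ.filter (fun l' => α l' i k ≠ 0 ∧ pderiv j (L l') ≠ 0) with hSdef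
  have hmemS : ∀ l', l' ∈ S ↔ (α l' i k ≠ 0 ∧ pderiv j (L l') ≠ 0) := by
    intro l'; simp [hSdef]
  set g : Fin N → PolyRing K M := fun l' => rename some (L l') with hgdef
  set d : Fin N → PolyRing K M := fun l' => rename some (pderiv j (L l')) with hddef
  have hgprime : ∀ l', Prime (g l') :=
    fun l' => Letters.prime_rename_some
      (UniqueFactorizationMonoid.irreducible_iff_prime.mp (hLirr l'))
  have hgirr : ∀ l', Irreducible (g l') := fun l' => (hgprime l').irreducible
  have hgne : ∀ l', g l' ≠ 0 := fun l' => (hgprime l').ne_zero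
  set Q : PolyRing K M := ∏ l' ∈ S, g l' with hQdef
  set P : PolyRing K M :=
    X none * ∑ l' ∈ S, (C (α l' i k) * d l') * ∏ l'' ∈ S.erase l', g l'' with hPdef
  have hlS : l ∈ S := (hmemS l).mpr ⟨hik, hj⟩
  have hQne : Q ≠ 0 := Finset.prod_ne_zero_iff.mpr fun l' _ => hgne l'
  have hnotdvd : ∀ l' ∈ S, ¬ g l' ∣ P := by
    intro l' hl' hdvd
    rcases (hgprime l').dvd_mul.mp hdvd with hd1 | hd2
    · obtain ⟨e, he⟩ := hd1
      rcases Letters.prime_X_none.irreducible.isUnit_or_isUnit he with h1 | h1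
      · exact (hgprime l').not_unit h1
      · have h0 := congrArg Letters.ψ he
        rw [Letters.ψ_X_none, map_mul, hgdef, Letters.ψ_rename] at h0
        rcases mul_eq_zero.mp h0.symm with h2 | h2
        · exact (hLirr l').ne_zero h2
        · exact (h1.map Letters.ψ).ne_zero h2
    · have hrest : g l' ∣ ∑ l'' ∈ S.erase l',
          (C (α l'' i k) * d l'') * ∏ l''' ∈ S.erase l'', g l''' := by
        apply Finset.dvd_sum
        intro l'' hl''
        apply dvd_mul_of_dvd_right
        apply Finset.dvd_prod_of_mem
        exact Finset.mem_erase.mpr ⟨(Finset.ne_of_mem_erase hl'').symm, hl'⟩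
      have hterm : g l' ∣ (C (α l' i k) * d l') * ∏ l'' ∈ S.erase l', g l'' := by
        have hsplit := Finset.add_sum_erase S
          (fun l'' => (C (α l'' i k) * d l'') * ∏ l''' ∈ S.erase l'', g l''') hl'
        calc g l' ∣ (∑ l'' ∈ S, (C (α l'' i k) * d l'') * ∏ l''' ∈ S.erase l'', g l''')
              - ∑ l'' ∈ S.erase l', (C (α l'' i k) * d l'') * ∏ l''' ∈ S.erase l'', g l''' :=
            dvd_sub hd2 hrest
          _ = (C (α l' i k) * d l') * ∏ l'' ∈ S.erase l', g l'' := by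
            rw [← hsplit]; ring
      have hcS := (hmemS l').mp hl'
      rcases (hgprime l').dvd_mul.mp hterm with hd3 | hd3
      · rcases (hgprime l').dvd_mul.mp hd3 with hd4 | hd4
        · exact (hgprime l').not_unit
            (isUnit_of_dvd_unit hd4 ((isUnit_iff_ne_zero.mpr hcS.1).map C))
        · exact Letters.not_dvd_pderiv j (L l') hcS.2
            (Letters.dvd_of_rename_dvd hd4)
      · obtain ⟨l'', hl'', hd5⟩ := (hgprime l').exists_mem_finset_dvd hd3
        have hass := Letters.associated_of_rename_associated
          ((hgirr l').associated_of_dvd (hgirr l'') hd5)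
        exact hLas l' l'' (Finset.ne_of_mem_erase hl'').symm hass
  have hrel : IsRelPrime P Q := by
    rw [hQdef]
    apply IsRelPrime.prod_right
    intro l' hl'
    exact Letters.isRelPrime_of_prime_not_dvd (hgprime l') (hnotdvd l' hl')
  have entry_eq :
      (eps K M • ∑ l', dlogTerm L j l' • ((α l').map (algebraMap K (FF K M)))) i k
        = algebraMap (PolyRing K M) (FF K M) P / algebraMap (PolyRing K M) (FF K M) Q := by
    rw [Matrix.smul_apply, Matrix.sum_apply]
    simp only [Matrix.smul_apply, Matrix.map_apply, smul_eq_mul]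
    have hrestrict : ∑ l' : Fin N, dlogTerm L j l' * algebraMap K (FF K M) (α l' i k)
        = ∑ l' ∈ S, algebraMap (PolyRing K M) (FF K M) (C (α l' i k) * d l')
            / algebraMap (PolyRing K M) (FF K M) (g l') := by
      rw [← Finset.sum_subset (Finset.subset_univ S) ?hz]
      · apply Finset.sum_congr rfl
        intro l' _
        rw [dlogTerm, IsScalarTower.algebraMap_apply K (PolyRing K M) (FF K M),
          MvPolynomial.algebraMap_eq, map_mul]
        rw [hddef, hgdef]
        ring
      case hz =>
        intro l' _ hl'
        rw [hmemS l'] at hl'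
        push_neg at hl'
        by_cases hc : α l' i k = 0
        · rw [hc, map_zero, mul_zero]
        · rw [dlogTerm, hl' hc, map_zero, map_zero, zero_div, zero_mul]
    rw [hrestrict]
    have hterm : ∀ l' ∈ S,
        algebraMap (PolyRing K M) (FF K M) (C (α l' i k) * d l')
            / algebraMap (PolyRing K M) (FF K M) (g l')
        = algebraMap (PolyRing K M) (FF K M)
              ((C (α l' i k) * d l') * ∏ l'' ∈ S.erase l', g l'')
            / algebraMap (PolyRing K M) (FF K M) Q := by
      intro l' hl'
      have hQsplit : Q = g l' * ∏ l'' ∈ S.erase l', g l'' :=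
        (Finset.mul_prod_erase S g hl').symm
      have hprodne : (∏ l'' ∈ S.erase l', g l'') ≠ 0 :=
        Finset.prod_ne_zero_iff.mpr fun l'' _ => hgne l''
      rw [hQsplit]
      simp only [map_mul]
      rw [mul_div_mul_right _ _ (Letters.φ_ne_zero hprodne)]
    rw [Finset.sum_congr rfl hterm, ← Finset.sum_div, ← map_sum, eps, ← mul_div_assoc,
      ← map_mul, hPdef]
  rw [entry_eq]
  exact ⟨P, Q, hQne, hrel, rfl, Finset.dvd_prod_of_mem g hlS⟩
end
end

section
/- (Leinartas' theorem) Let f = p/q be a rational function in K(x_1,…,x_d) with p, q ∈ K[X] and let q = q_1^{e_1} ⋯ q_m^{e_m} be the factorization of q into pairwise non-associated irreducible polynomials. Then f can be written as a finite sum f = Σ_S p_S / ∏_{i∈S} q_i^{b_{S,i}}, where the sum runs over subsets S ⊆ {1,…,m}, each p_S ∈ K[X], each b_{S,i} is a positive integer, and for every S occurring in the sum: the polynomials {q_i | i ∈ S} have a common zero in K̄^d and are algebraically independent over K. -/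
open MvPolynomial

noncomputable section

open Finset

namespace LeinartasAux

theorem exists_common_zero_of_ne_top {K : Type*} [Field K] {d : ℕ}
    (I : Ideal (MvPolynomial (Fin d) K)) (hI : I ≠ ⊤) :
    ∃ x : Fin d → AlgebraicClosure K, ∀ p ∈ I, aeval x p = 0 := by
  obtain ⟨M, hM, hIM⟩ := Ideal.exists_le_maximal I hI
  let L := MvPolynomial (Fin d) K ⧸ M
  letI : Field L := Ideal.Quotient.field M
  have hint : RingHom.IsIntegral (RingHom.comp (Ideal.Quotient.mk M) (MvPolynomial.C)) :=
    MvPolynomial.quotient_mk_comp_C_isIntegral_of_isJacobsonRing M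
  have heq : (RingHom.comp (Ideal.Quotient.mk M) (MvPolynomial.C (σ := Fin d)))
      = algebraMap K L := rfl
  rw [heq] at hint
  have : Algebra.IsIntegral K L := ⟨hint⟩
  have : Algebra.IsAlgebraic K L := Algebra.IsIntegral.isAlgebraic
  haveI : Module.IsTorsionFree K L := NoZeroSMulDivisors.iff_algebraMap_injective.mpr
    (algebraMap K L).injective
  let ψ : L →ₐ[K] AlgebraicClosure K := IsAlgClosed.lift
  let φ : MvPolynomial (Fin d) K →ₐ[K] AlgebraicClosure K :=
    ψ.comp (Ideal.Quotient.mkₐ K M)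
  refine ⟨fun j => φ (X j), fun p hp => ?_⟩
  have h1 : aeval (fun j => φ (X j)) p = φ p := by
    conv_rhs => rw [aeval_unique φ]
    rfl
  rw [h1]
  have : Ideal.Quotient.mkₐ K M p = 0 := by
    simpa [Ideal.Quotient.eq_zero_iff_mem] using hIM hp
  simp [φ, this]



variable {K : Type*} [Field K] {d m : ℕ}

/-- The predicate: `f` admits a Leinartas decomposition w.r.t. the family `q`. -/
def Good (q : Fin m → MvPolynomial (Fin d) K)
    (f : FractionRing (MvPolynomial (Fin d) K)) : Prop :=
  ∃ (P : Finset (Fin m) → MvPolynomial (Fin d) K)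
    (b : Finset (Fin m) → Fin m → ℕ),
    (∀ S i, i ∈ S → 1 ≤ b S i) ∧
    f = ∑ S : Finset (Fin m),
      algebraMap (MvPolynomial (Fin d) K) _ (P S)
        / algebraMap (MvPolynomial (Fin d) K) _ (∏ i ∈ S, q i ^ b S i) ∧
    ∀ S : Finset (Fin m), P S ≠ 0 →
      (∃ x : Fin d → AlgebraicClosure K, ∀ i ∈ S, aeval x (q i) = 0) ∧
      AlgebraicIndependent K (fun i : S => q i)

variable (q : Fin m → MvPolynomial (Fin d) K)

local notation "R" => MvPolynomial (Fin d) K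
local notation "F" => FractionRing (MvPolynomial (Fin d) K)
local notation "φ" => algebraMap (MvPolynomial (Fin d) K) (FractionRing (MvPolynomial (Fin d) K))

theorem good_zero : Good q 0 := by
  refine ⟨0, fun _ _ => 1, fun _ _ _ => le_rfl, ?_, fun S hS => absurd rfl hS⟩
  simp

theorem good_add (hq0 : ∀ i, q i ≠ 0) {f g : F} (hf : Good q f) (hg : Good q g) :
    Good q (f + g) := by
  obtain ⟨P₁, b₁, hb₁, rfl, hc₁⟩ := hf
  obtain ⟨P₂, b₂, hb₂, rfl, hc₂⟩ := hg
  refine ⟨fun S => P₁ S * ∏ i ∈ S, q i ^ ((b₁ S ⊔ b₂ S) i - b₁ S i)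
      + P₂ S * ∏ i ∈ S, q i ^ ((b₁ S ⊔ b₂ S) i - b₂ S i),
    fun S => b₁ S ⊔ b₂ S, ?_, ?_, ?_⟩
  · intro S i hi
    exact le_trans (hb₁ S i hi) (by simp [Pi.sup_apply])
  · rw [← Finset.sum_add_distrib]
    refine Finset.sum_congr rfl fun S _ => ?_
    have key : ∀ (P : Finset (Fin m) → MvPolynomial (Fin d) K)
        (bb : Finset (Fin m) → Fin m → ℕ),
        (∀ i, bb S i ≤ (b₁ S ⊔ b₂ S) i) →
        φ (P S * ∏ i ∈ S, q i ^ ((b₁ S ⊔ b₂ S) i - bb S i))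
          / φ (∏ i ∈ S, q i ^ (b₁ S ⊔ b₂ S) i)
        = φ (P S) / φ (∏ i ∈ S, q i ^ bb S i) := by
      intro P bb hle
      have hA : (∏ i ∈ S, q i ^ ((b₁ S ⊔ b₂ S) i - bb S i)) ≠ 0 :=
        Finset.prod_ne_zero_iff.2 fun i _ => pow_ne_zero _ (hq0 i)
      have hprod : (∏ i ∈ S, q i ^ bb S i) * (∏ i ∈ S, q i ^ ((b₁ S ⊔ b₂ S) i - bb S i))
          = ∏ i ∈ S, q i ^ (b₁ S ⊔ b₂ S) i := by
        rw [← Finset.prod_mul_distrib]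
        refine Finset.prod_congr rfl fun i _ => ?_
        rw [← pow_add, Nat.add_sub_cancel' (hle i)]
      have hA' : φ (∏ i ∈ S, q i ^ ((b₁ S ⊔ b₂ S) i - bb S i)) ≠ 0 :=
        (map_ne_zero_iff _ (IsFractionRing.injective (MvPolynomial (Fin d) K) F)).2 hA
      rw [← hprod, map_mul, map_mul, mul_div_mul_right _ _ hA']
    rw [RingHom.map_add, add_div, key P₁ b₁ (fun i => by simp [Pi.sup_apply]),
      key P₂ b₂ (fun i => by simp [Pi.sup_apply])]
  · intro S hS
    rcases ne_or_eq (P₁ S) 0 with h1 | h1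
    · exact hc₁ S h1
    rcases ne_or_eq (P₂ S) 0 with h2 | h2
    · exact hc₂ S h2
    exact absurd (by simp [h1, h2]) hS

theorem good_smul (hq0 : ∀ i, q i ≠ 0) (c : R) {f : F} (hf : Good q f) :
    Good q (φ c * f) := by
  obtain ⟨P, b, hb, rfl, hc⟩ := hf
  refine ⟨fun S => c * P S, b, hb, ?_, fun S hS => hc S fun h => hS (by simp [h])⟩
  rw [Finset.mul_sum]
  exact Finset.sum_congr rfl fun S _ => by rw [map_mul, mul_div_assoc]

theorem good_sum (hq0 : ∀ i, q i ≠ 0) {ι : Type*} (s : Finset ι) (g : ι → F)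
    (h : ∀ i ∈ s, Good q (g i)) : Good q (∑ i ∈ s, g i) := by
  classical
  induction s using Finset.induction_on with
  | empty => simpa using good_zero q
  | insert a s hnot ih =>
    rw [Finset.sum_insert hnot]
    exact good_add q hq0 (h a (mem_insert_self a s))
      (ih fun i hi => h i (mem_insert_of_mem hi))

/-- support of an exponent vector as a `Finset`. -/
def Sup (b : Fin m → ℕ) : Finset (Fin m) := Finset.univ.filter (fun i => b i ≠ 0)

theorem mem_Sup {b : Fin m → ℕ} {i : Fin m} : i ∈ Sup b ↔ b i ≠ 0 := by
  simp [Sup]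

theorem good_basic (hq0 : ∀ i, q i ≠ 0) (b : Fin m → ℕ)
    (hz : ∃ x : Fin d → AlgebraicClosure K, ∀ i ∈ Sup b, aeval x (q i) = 0)
    (hind : AlgebraicIndependent K (fun i : (Sup b : Finset (Fin m)) => q i)) :
    Good q ((φ (∏ i, q i ^ b i))⁻¹) := by
  classical
  refine ⟨fun S => if S = Sup b then 1 else 0,
    fun S i => if S = Sup b then b i else 1, ?_, ?_, ?_⟩
  · intro S i hi
    simp only []
    split
    · next h => exact Nat.one_le_iff_ne_zero.2 (mem_Sup.1 (h ▸ hi))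
    · exact le_rfl
  · rw [Finset.sum_eq_single (Sup b)]
    · have h2 : (∏ i ∈ Sup b, q i ^ b i) = ∏ i, q i ^ b i := by
        refine Finset.prod_subset (Finset.subset_univ _) fun i _ hi => ?_
        simp only [Sup, Finset.mem_filter, Finset.mem_univ, true_and, not_not] at hi
        simp [hi]
      simp only [eq_self_iff_true, if_true, if_pos rfl]
      rw [h2, map_one, one_div]
    · intro S _ hS
      simp [if_neg hS]
    · simp
  · intro S hS
    have h : S = Sup b := by by_contra h; exact hS (if_neg h)
    subst h
    exact ⟨hz, hind⟩

theorem one_le_totalDegree {p : MvPolynomial (Fin d) K} (hirr : Irreducible p) :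
    1 ≤ p.totalDegree := by
  by_contra h
  have h0 : p.totalDegree = 0 := by omega
  have hp : p = C (coeff 0 p) := by
    ext mo
    rcases eq_or_ne mo 0 with rfl | hmo
    · simp
    · rw [coeff_C, if_neg (Ne.symm hmo)]
      by_contra hne
      have hmem : mo ∈ p.support := mem_support_iff.2 hne
      exact hmo (Finsupp.ext fun x => (totalDegree_eq_zero_iff _ p).1 h0 mo hmem x)
  rcases eq_or_ne (coeff 0 p) 0 with hc | hc
  · exact hirr.ne_zero (by rw [hp, hc, map_zero])
  · exact hirr.not_isUnit (hp ▸ IsUnit.map (C : K →+* MvPolynomial (Fin d) K)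
      (isUnit_iff_ne_zero.2 hc))

theorem geom_nat (B n : ℕ) (hB : 1 ≤ B) :
    ∑ t ∈ Finset.range n, (B - 1) * B ^ t = B ^ n - 1 := by
  induction n with
  | zero => simp
  | succ n ih =>
    rw [Finset.sum_range_succ, ih]
    have h1 : 1 ≤ B ^ n := Nat.one_le_pow _ _ hB
    have h2 : B ^ n ≤ B ^ (n + 1) := Nat.pow_le_pow_right hB (by omega)
    have h3 : (B - 1) * B ^ n = B ^ (n + 1) - B ^ n := by
      rw [Nat.sub_mul, one_mul, pow_succ, mul_comm]
    omega

/-- positional encoding comparison for lexicographic order -/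
theorem enc_lt {B : ℕ} {u v : Fin m → ℕ} (hu : ∀ i, u i < B)
    (j : Fin m) (hj : u j < v j) (heq : ∀ i, i < j → u i = v i) :
    ∑ i, u i * B ^ (m - 1 - i.val) < ∑ i, v i * B ^ (m - 1 - i.val) := by
  have hB : 1 ≤ B := by have := hu j; omega
  set e : Fin m → ℕ := fun i => m - 1 - i.val with he
  have hem : ∀ i : Fin m, i.val ≤ m - 1 := fun i => by omega
  have htail : ∑ i ∈ Finset.Ioi j, u i * B ^ e i < B ^ e j := by
    calc ∑ i ∈ Finset.Ioi j, u i * B ^ e i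
        ≤ ∑ i ∈ Finset.Ioi j, (B - 1) * B ^ e i := by
          refine Finset.sum_le_sum fun i _ => Nat.mul_le_mul_right _ (by have := hu i; omega)
      _ = ∑ t ∈ (Finset.Ioi j).image e, (B - 1) * B ^ t := by
          rw [Finset.sum_image]
          intro a ha b hb hab
          have ha' := hem a; have hb' := hem b
          have : a.val = b.val := by simp only [he] at hab; omega
          exact Fin.ext this
      _ ≤ ∑ t ∈ Finset.range (e j), (B - 1) * B ^ t := by
          refine Finset.sum_le_sum_of_subset fun t ht => ?_
          simp only [Finset.mem_image, Finset.mem_Ioi] at ht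
          obtain ⟨a, ha, rfl⟩ := ht
          have := hem a; have := hem j
          have : j.val < a.val := ha
          simp only [Finset.mem_range, he]
          omega
      _ = B ^ e j - 1 := geom_nat _ _ hB
      _ < B ^ e j := by have : 1 ≤ B ^ e j := Nat.one_le_pow _ _ hB; omega
  have hsplit : ∀ w : Fin m → ℕ,
      ∑ i, w i * B ^ e i
        = ∑ i ∈ Finset.Iio j, w i * B ^ e i + w j * B ^ e j
          + ∑ i ∈ Finset.Ioi j, w i * B ^ e i := by
    intro w
    have huniv : (Finset.univ : Finset (Fin m)) = (insert j (Finset.Iio j)) ∪ Finset.Ioi j := by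
      rw [Finset.Iio_insert]
      ext i
      simp [le_or_gt i j, Finset.mem_union]
    have hdisj : Disjoint (insert j (Finset.Iio j)) (Finset.Ioi j) := by
      rw [Finset.Iio_insert]
      simp only [Finset.disjoint_left, Finset.mem_Iic, Finset.mem_Ioi]
      exact fun a ha => not_lt.2 ha
    rw [huniv, Finset.sum_union hdisj, Finset.sum_insert (by simp)]
    ring
  rw [hsplit u, hsplit v]
  have h1 : ∑ i ∈ Finset.Iio j, u i * B ^ e i = ∑ i ∈ Finset.Iio j, v i * B ^ e i :=
    Finset.sum_congr rfl fun i hi => by rw [heq i (Finset.mem_Iio.1 hi)]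
  have h2 : u j * B ^ e j + B ^ e j ≤ v j * B ^ e j := by
    have h4 : (u j + 1) * B ^ e j ≤ v j * B ^ e j := Nat.mul_le_mul_right _ (by omega)
    rw [Nat.add_mul, one_mul] at h4
    exact h4
  have h3 : (0:ℕ) ≤ ∑ i ∈ Finset.Ioi j, v i * B ^ e i := Nat.zero_le _
  omega


/-- weighted degree of an exponent vector. -/
def Dg (v : Fin m → ℕ) : ℕ := ∑ i, v i * (q i).totalDegree

/-- positional encoding of an exponent vector, base `Dg q v + 1`. -/
def Enc (v : Fin m → ℕ) : ℕ := ∑ i, v i * (Dg q v + 1) ^ (m - 1 - i.val)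

set_option maxHeartbeats 3000000 in
theorem good_inv (hqirr : ∀ i, Irreducible (q i)) (b : Fin m → ℕ) :
    Good q ((φ (∏ i, q i ^ b i))⁻¹) := by
  classical
  have hq0 : ∀ i, q i ≠ 0 := fun i => (hqirr i).ne_zero
  have hdeg : ∀ i, 1 ≤ (q i).totalDegree := fun i => one_le_totalDegree (hqirr i)
  have hQne : ∀ v : Fin m → ℕ, (∏ i, q i ^ v i) ≠ 0 :=
    fun v => Finset.prod_ne_zero_iff.2 fun i _ => pow_ne_zero _ (hq0 i)
  have hφQne : ∀ v : Fin m → ℕ, φ (∏ i, q i ^ v i) ≠ 0 := fun v =>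
    (map_ne_zero_iff _ (IsFractionRing.injective (MvPolynomial (Fin d) K) F)).2 (hQne v)
  have hbound : ∀ v : Fin m → ℕ, ∀ i, v i < Dg q v + 1 := by
    intro v i
    have h1 : v i * 1 ≤ v i * (q i).totalDegree := Nat.mul_le_mul_left _ (hdeg i)
    have h2 : v i * (q i).totalDegree ≤ Dg q v :=
      Finset.single_le_sum (f := fun j => v j * (q j).totalDegree)
        (fun j _ => Nat.zero_le _) (Finset.mem_univ i)
    omega
  suffices key : ∀ s D E (b : Fin m → ℕ), (Sup b).card ≤ s → Dg q b ≤ D →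
      Enc q b ≤ E → Good q ((φ (∏ i, q i ^ b i))⁻¹) from
    key _ _ _ b le_rfl le_rfl le_rfl
  intro s
  induction s using Nat.strong_induction_on with
  | _ s IHs =>
  intro D
  induction D using Nat.strong_induction_on with
  | _ D IHD =>
  intro E
  induction E using Nat.strong_induction_on with
  | _ E IHE =>
  intro b hs hD hE
  by_cases hz : ∃ x : Fin d → AlgebraicClosure K, ∀ i ∈ Sup b, aeval x (q i) = 0
  · by_cases hind : AlgebraicIndependent K (fun i : (Sup b : Finset (Fin m)) => q i)
    · exact good_basic q hq0 b hz hind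
    · -- algebraic-dependence reduction
      set S₀ := Sup b with hS₀
      obtain ⟨κ, hκrel, hκ0⟩ : ∃ κ : MvPolynomial S₀ K,
          aeval (fun i : S₀ => q ↑i) κ = 0 ∧ κ ≠ 0 := by
        rw [algebraicIndependent_iff] at hind
        push_neg at hind
        obtain ⟨κ, h1, h2⟩ := hind
        exact ⟨κ, h1, h2⟩
      set ext : (S₀ →₀ ℕ) → (Fin m → ℕ) :=
        fun α i => if h : i ∈ S₀ then α ⟨i, h⟩ else 0 with hext
      have hextmem : ∀ (α : S₀ →₀ ℕ) (i : Fin m) (h : i ∈ S₀), ext α i = α ⟨i, h⟩ :=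
        fun α i h => dif_pos h
      have hext0 : ∀ (α : S₀ →₀ ℕ) (i : Fin m), i ∉ S₀ → ext α i = 0 :=
        fun α i h => dif_neg h
      have hQp : ∀ α : S₀ →₀ ℕ, (∏ i : S₀, q ↑i ^ α i) = ∏ j, q j ^ ext α j := by
        intro α
        have h1 : (∏ j, q j ^ ext α j) = ∏ j ∈ S₀, q j ^ ext α j :=
          (Finset.prod_subset (Finset.subset_univ _)
            (fun j _ hj => by rw [hext0 α j hj, pow_zero])).symm
        rw [h1, ← Finset.prod_coe_sort S₀ (fun j => q j ^ ext α j)]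
        refine Finset.prod_congr rfl fun i _ => ?_
        rw [hextmem α ↑i i.2]
      have hrel : ∑ α ∈ κ.support, (C (coeff α κ) : MvPolynomial (Fin d) K)
          * ∏ j, q j ^ ext α j = 0 := by
        rw [aeval_def, eval₂_eq'] at hκrel
        simpa only [algebraMap_eq, hQp] using hκrel
      letI : LinearOrder (Lex (Fin m → ℕ)) :=
        @linearOrderOfSTO _ (· < ·)
          { trichotomous := (Pi.isTrichotomous_lex _ _ IsWellFounded.wf).1 }
          (Classical.decRel _)
      have hsuppne : κ.support.Nonempty :=
        Finset.nonempty_iff_ne_empty.2 fun h => hκ0 (support_eq_empty.1 h)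
      obtain ⟨γ, hγs, hγmin⟩ := Finset.exists_min_image κ.support
        (fun α => toLex (Dg q (ext α), toLex (ext α))) hsuppne
      set cγ := coeff γ κ with hcγdef
      have hcγ : cγ ≠ 0 := mem_support_iff.1 hγs
      have hCne : (C cγ : MvPolynomial (Fin d) K) ≠ 0 := fun h => hcγ (by
        simpa using congrArg (coeff 0) h)
      have hφCne : φ (C cγ) ≠ 0 :=
        (map_ne_zero_iff _ (IsFractionRing.injective (MvPolynomial (Fin d) K) F)).2 hCne
      have hrel2 : (C cγ : MvPolynomial (Fin d) K) * ∏ j, q j ^ ext γ j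
          = - ∑ α ∈ κ.support.erase γ, (C (coeff α κ) : MvPolynomial (Fin d) K)
              * ∏ j, q j ^ ext α j := by
        rw [← Finset.add_sum_erase _ _ hγs] at hrel
        exact eq_neg_of_add_eq_zero_left hrel
      set num : (S₀ →₀ ℕ) → (Fin m → ℕ) := fun α j => ext α j - (ext γ j + b j) with hnum
      set den : (S₀ →₀ ℕ) → (Fin m → ℕ) := fun α j => (ext γ j + b j) - ext α j with hden
      have hkey : ∀ α : S₀ →₀ ℕ,
          (∏ j, q j ^ ext α j) * ∏ j, q j ^ den α j
            = (∏ j, q j ^ num α j) * ∏ j, q j ^ (ext γ j + b j) := by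
        intro α
        rw [← Finset.prod_mul_distrib, ← Finset.prod_mul_distrib]
        refine Finset.prod_congr rfl fun j _ => ?_
        rw [← pow_add, ← pow_add]
        congr 1
        simp only [hnum, hden]
        omega
      have hsplit : (∏ j, q j ^ (ext γ j + b j))
          = (∏ j, q j ^ ext γ j) * ∏ j, q j ^ b j := by
        rw [← Finset.prod_mul_distrib]
        exact Finset.prod_congr rfl fun j _ => pow_add _ _ _
      have hmain : (φ (∏ i, q i ^ b i))⁻¹
          = ∑ α ∈ κ.support.erase γ,
              φ ((C (-(coeff α κ) * cγ⁻¹) : MvPolynomial (Fin d) K) * ∏ j, q j ^ num α j)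
                * (φ (∏ j, q j ^ den α j))⁻¹ := by
        have hprodne : φ ((C cγ : MvPolynomial (Fin d) K)
            * ∏ j, q j ^ (ext γ j + b j)) ≠ 0 := by
          rw [map_mul]
          exact mul_ne_zero hφCne (hφQne _)
        have step1 : (φ (∏ i, q i ^ b i))⁻¹
            = φ ((C cγ : MvPolynomial (Fin d) K) * ∏ j, q j ^ ext γ j)
              / φ ((C cγ : MvPolynomial (Fin d) K) * ∏ j, q j ^ (ext γ j + b j)) := by
          rw [eq_div_iff hprodne]
          have h2 : (C cγ : MvPolynomial (Fin d) K) * ∏ j, q j ^ (ext γ j + b j)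
              = ((C cγ : MvPolynomial (Fin d) K) * ∏ j, q j ^ ext γ j)
                * ∏ j, q j ^ b j := by
            rw [hsplit]; ring
          rw [h2, map_mul, mul_left_comm, inv_mul_cancel₀ (hφQne b), mul_one]
        rw [step1, hrel2, map_neg, map_sum, neg_div, Finset.sum_div,
          ← Finset.sum_neg_distrib]
        refine Finset.sum_congr rfl fun α hα => ?_
        have hCneg : (C (-(coeff α κ) * cγ⁻¹) : MvPolynomial (Fin d) K)
            = - C (coeff α κ * cγ⁻¹) := by
          rw [neg_mul, map_neg]
        rw [hCneg, neg_mul, map_neg, neg_mul, neg_inj, ← div_eq_mul_inv,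
          div_eq_div_iff hprodne (hφQne (den α)), ← map_mul, ← map_mul]
        congr 1
        have hCC : (C (coeff α κ * cγ⁻¹) : MvPolynomial (Fin d) K) * C cγ
            = C (coeff α κ) := by
          rw [← C_mul]
          congr 1
          field_simp
        calc ((C (coeff α κ) : MvPolynomial (Fin d) K) * ∏ j, q j ^ ext α j)
              * ∏ j, q j ^ den α j
            = C (coeff α κ) * ((∏ j, q j ^ num α j) * ∏ j, q j ^ (ext γ j + b j)) := by
              rw [mul_assoc, hkey α]
          _ = ((C (coeff α κ * cγ⁻¹) : MvPolynomial (Fin d) K) * ∏ j, q j ^ num α j)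
              * ((C cγ : MvPolynomial (Fin d) K) * ∏ j, q j ^ (ext γ j + b j)) := by
              rw [← hCC]; ring
      rw [hmain]
      refine good_sum q hq0 _ _ fun α hα => good_smul q hq0 _ ?_
      -- measure decrease
      have hαγ : α ≠ γ := Finset.ne_of_mem_erase hα
      have hmin := hγmin α (Finset.mem_of_mem_erase hα)
      rw [Prod.Lex.le_iff] at hmin; simp only [ofLex_toLex] at hmin
      have hb0 : ∀ j, j ∉ S₀ → b j = 0 := by
        intro j hj
        rw [hS₀, mem_Sup, not_not] at hj
        exact hj
      have hsubS : Sup (den α) ⊆ S₀ := by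
        intro j hj
        rw [mem_Sup] at hj
        by_contra hjS
        have h1 : ext γ j = 0 := hext0 _ _ hjS
        have h2 : b j = 0 := hb0 j hjS
        simp only [hden] at hj
        omega
      by_cases hfull : ∀ j ∈ S₀, den α j ≠ 0
      · have hle : ∀ j, ext α j ≤ ext γ j + b j := by
          intro j
          by_cases hjS : j ∈ S₀
          · have := hfull j hjS
            simp only [hden] at this
            omega
          · rw [hext0 α j hjS]
            exact Nat.zero_le _
        have hpt : ∀ j, den α j + ext α j = ext γ j + b j := by
          intro j
          have := hle j
          simp only [hden]
          omega
        have hDsum : Dg q (den α) + Dg q (ext α) = Dg q (ext γ) + Dg q b := by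
          unfold Dg
          rw [← Finset.sum_add_distrib, ← Finset.sum_add_distrib]
          refine Finset.sum_congr rfl fun j _ => ?_
          rw [← Nat.add_mul, ← Nat.add_mul, hpt j]
        rcases hmin with hlt | ⟨heq, hle2⟩
        · have hDlt : Dg q (den α) < Dg q b := by omega
          exact IHD _ (lt_of_lt_of_le hDlt hD) _ _
            (le_trans (Finset.card_le_card hsubS) hs) le_rfl le_rfl
        · have hDeq : Dg q (den α) = Dg q b := by omega
          have hne2 : toLex (ext γ) ≠ toLex (ext α) := by
            intro h
            apply hαγ
            have h' : ext α = ext γ := (toLex_inj.1 h).symm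
            refine Finsupp.ext fun x => ?_
            have hx := congrFun h' ↑x
            rwa [hextmem _ _ x.2, hextmem _ _ x.2] at hx
          have hlex : toLex (ext γ) < toLex (ext α) := lt_of_le_of_ne hle2 hne2
          obtain ⟨j, hjeq, hjlt⟩ : ∃ j, (∀ i, i < j → ext γ i = ext α i)
              ∧ ext γ j < ext α j := hlex
          have hblt : den α j < b j := by
            have h1 := hpt j
            simp only [hden] at h1 ⊢
            omega
          have hbeq : ∀ i, i < j → den α i = b i := by
            intro i hi
            have h1 := hpt i
            have h2 := hjeq i hi
            omega
          have hEnc : Enc q (den α) < Enc q b := by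
            unfold Enc
            rw [hDeq]
            exact enc_lt (fun i => hDeq ▸ hbound (den α) i) j hblt hbeq
          exact IHE _ (lt_of_lt_of_le hEnc hE) _
            (le_trans (Finset.card_le_card hsubS) hs) (hDeq ▸ hD) le_rfl
      · push_neg at hfull
        obtain ⟨j, hjS, hj0⟩ := hfull
        have hssub : Sup (den α) ⊂ S₀ :=
          ⟨hsubS, fun h => (mem_Sup.1 (h hjS)) hj0⟩
        have hcard : (Sup (den α)).card < s :=
          lt_of_lt_of_le (Finset.card_lt_card hssub) hs
        exact IHs _ hcard _ _ _ le_rfl le_rfl le_rfl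

  · -- Nullstellensatz reduction
    set S₀ := Sup b with hS₀
    have hItop : Ideal.span (Set.range (fun i : S₀ => q ↑i)) = ⊤ := by
      by_contra hI
      obtain ⟨x, hx⟩ := exists_common_zero_of_ne_top _ hI
      exact hz ⟨x, fun i hi => hx _ (Ideal.subset_span ⟨⟨i, hi⟩, rfl⟩)⟩
    have h1 : (1 : MvPolynomial (Fin d) K)
        ∈ Ideal.span (Set.range (fun i : S₀ => q ↑i)) := hItop ▸ Submodule.mem_top
    obtain ⟨c, hc⟩ := Finsupp.mem_span_range_iff_exists_finsupp.1 h1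
    -- hc : (c.sum fun i a => a • q ↑i) = 1
    have hbpos : ∀ i : S₀, 1 ≤ b ↑i := fun i =>
      Nat.one_le_iff_ne_zero.2 (mem_Sup.1 i.2)
    set b' : S₀ → Fin m → ℕ := fun i => Function.update b ↑i (b ↑i - 1) with hb'
    have hprod : ∀ i : S₀, q ↑i * ∏ j, q j ^ b' i j = ∏ j, q j ^ b j := by
      intro i
      rw [← Finset.mul_prod_erase Finset.univ _ (Finset.mem_univ (↑i : Fin m)),
        ← Finset.mul_prod_erase Finset.univ (fun j => q j ^ b j) (Finset.mem_univ (↑i : Fin m)),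
        ← mul_assoc]
      congr 1
      · simp only [hb', Function.update_self]
        rw [← pow_succ']
        congr 1
        have := hbpos i
        omega
      · refine Finset.prod_congr rfl fun j hj => ?_
        simp only [hb']
        rw [Function.update_of_ne (Finset.ne_of_mem_erase hj)]
    have hterm : ∀ i : S₀, (φ (∏ j, q j ^ b' i j))⁻¹
        = φ (q ↑i) * (φ (∏ j, q j ^ b j))⁻¹ := by
      intro i
      have hq' : φ (q ↑i) ≠ 0 :=
        (map_ne_zero_iff _ (IsFractionRing.injective (MvPolynomial (Fin d) K) F)).2 (hq0 ↑i)
      rw [← hprod i, map_mul, mul_inv, ← mul_assoc, mul_inv_cancel₀ hq', one_mul]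
    have hrw : (φ (∏ i, q i ^ b i))⁻¹
        = ∑ i ∈ c.support, φ (c i) * (φ (∏ j, q j ^ b' i j))⁻¹ := by
      have : ∑ i ∈ c.support, φ (c i) * (φ (∏ j, q j ^ b' i j))⁻¹
          = φ (c.sum fun i a => a • q ↑i) * (φ (∏ j, q j ^ b j))⁻¹ := by
        rw [Finsupp.sum, map_sum, Finset.sum_mul]
        refine Finset.sum_congr rfl fun i _ => ?_
        rw [hterm i, smul_eq_mul, map_mul, mul_assoc]
      rw [this, hc, map_one, one_mul]
    rw [hrw]
    refine good_sum q hq0 _ _ fun i _ => good_smul q hq0 _ ?_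
    -- measure decreases: Dg (b' i) < Dg b
    have hDlt : Dg q (b' i) < Dg q b := by
      unfold Dg
      refine Finset.sum_lt_sum (fun j _ => ?_) ⟨↑i, Finset.mem_univ _, ?_⟩
      · refine Nat.mul_le_mul_right _ ?_
        simp only [hb']
        rcases eq_or_ne j ↑i with rfl | hne
        · rw [Function.update_self]; omega
        · rw [Function.update_of_ne hne]
      · simp only [hb', Function.update_self]
        have h1 := hbpos i
        have h2 := hdeg ↑i
        have : b ↑i - 1 < b ↑i := by omega
        exact Nat.mul_lt_mul_of_lt_of_le this le_rfl (by omega)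
    have hsub : Sup (b' i) ⊆ Sup b := by
      intro j hj
      rw [mem_Sup] at hj ⊢
      simp only [hb'] at hj
      rcases eq_or_ne j ↑i with rfl | hne
      · have := hbpos i; omega
      · rwa [Function.update_of_ne hne] at hj
    exact IHD (Dg q (b' i)) (lt_of_lt_of_le hDlt hD) (Enc q (b' i)) (b' i)
      (le_trans (Finset.card_le_card hsub) hs) le_rfl le_rfl

end LeinartasAux

/-- Leinartas' theorem: a rational function `f = p/q` with
`q = q₁^{e₁} ⋯ q_m^{e_m}` a product of pairwise non-associated irreducible polynomials can be
written as a sum of terms `p_S / ∏_{i∈S} q_i^{b_{S,i}}` over subsets `S ⊆ {1,…,m}` such that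
for every occurring `S` the polynomials `{q_i | i ∈ S}` have a common zero in `K̄^d` and are
algebraically independent over `K`. -/
theorem leinartas_decomposition
    {K : Type*} [Field K] {d m : ℕ}
    (p : MvPolynomial (Fin d) K)
    (q : Fin m → MvPolynomial (Fin d) K)
    (hqirr : ∀ i, Irreducible (q i))
    (hqass : ∀ i i', i ≠ i' → ¬ Associated (q i) (q i'))
    (e : Fin m → ℕ) (he : ∀ i, 1 ≤ e i)
    (f : FractionRing (MvPolynomial (Fin d) K))
    (hf : f = algebraMap (MvPolynomial (Fin d) K) _ p
      / algebraMap (MvPolynomial (Fin d) K) _ (∏ i, q i ^ e i)) :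
    ∃ (P : Finset (Fin m) → MvPolynomial (Fin d) K)
      (b : Finset (Fin m) → Fin m → ℕ),
      (∀ S i, i ∈ S → 1 ≤ b S i) ∧
      f = ∑ S : Finset (Fin m),
        algebraMap (MvPolynomial (Fin d) K) _ (P S)
          / algebraMap (MvPolynomial (Fin d) K) _ (∏ i ∈ S, q i ^ b S i) ∧
      ∀ S : Finset (Fin m), P S ≠ 0 →
        (∃ x : Fin d → AlgebraicClosure K, ∀ i ∈ S, aeval x (q i) = 0) ∧
        AlgebraicIndependent K (fun i : S => q i) := by
  have hq0 : ∀ i, q i ≠ 0 := fun i => (hqirr i).ne_zero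
  have h := LeinartasAux.good_smul q hq0 p (LeinartasAux.good_inv q hqirr e)
  rw [← div_eq_mul_inv] at h
  rw [hf]
  exact h
end
end
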